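/- Let m be a positive even integer, let η ≥ 0, β ≠ 0, τ ≥ 0 be real numbers, let 1 < α ≤ 2, let a < b be real numbers, and set μ_k = 2πk/(b − a) for integers k. Given ψ : {0,…,m−1} → ℂ with discrete Fourier transform ψ̂_k = Σ_{j=0}^{m−1} ψ_j · exp(−2πi·k·j/m), define ψ**_j = (1/m) · Σ_{k=−m/2}^{m/2−1} exp(−((η + iβ)/(η² + β²))·|μ_k|^α·τ) · ψ̂_k · exp(2πi·k·j/m). Then Σ_{j=0}^{m−1} |ψ**_j|² ≤ Σ_{j=0}^{m−1} |ψ_j|². -/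

import Mathlib

open Complex Finset


open Complex Finset

lemma exp_sum_range (m : ℕ) (hm : 0 < m) (d : ℤ) :
    ∑ j ∈ Finset.range m, Complex.exp (2 * (Real.pi:ℂ) * Complex.I * d * j / m)
      = if (m:ℤ) ∣ d then (m:ℂ) else 0 := by
  have hm0 : (m:ℂ) ≠ 0 := Nat.cast_ne_zero.mpr hm.ne'
  have hx : ∀ j : ℕ, Complex.exp (2 * (Real.pi:ℂ) * Complex.I * d * j / m)
      = (Complex.exp (2 * (Real.pi:ℂ) * Complex.I * d / m)) ^ j := by
    intro j
    rw [← Complex.exp_nat_mul]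
    congr 1
    ring
  set x := Complex.exp (2 * (Real.pi:ℂ) * Complex.I * d / m) with hxdef
  rw [Finset.sum_congr rfl fun j _ => hx j]
  by_cases hd : (m:ℤ) ∣ d
  · have hx1 : x = 1 := by
      obtain ⟨c, rfl⟩ := hd
      have harg : 2 * (Real.pi:ℂ) * Complex.I * ((m * c : ℤ):ℂ) / m = (c:ℂ) * (2 * Real.pi * Complex.I) := by
        push_cast
        field_simp
      rw [hxdef, harg, Complex.exp_int_mul_two_pi_mul_I]
    simp [hx1, hd]
  · have hx1 : x ≠ 1 := by
      intro h
      rw [hxdef, Complex.exp_eq_one_iff] at h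
      obtain ⟨n, hn⟩ := h
      apply hd
      have h2 : (d:ℂ) = (n:ℂ) * m := by
        have hπ : (Real.pi:ℂ) ≠ 0 := by exact_mod_cast Real.pi_ne_zero
        field_simp at hn
        have h2PI : (2 * (Real.pi:ℂ) * Complex.I) ≠ 0 :=
          mul_ne_zero (mul_ne_zero two_ne_zero hπ) Complex.I_ne_zero
        apply mul_left_cancel₀ h2PI
        linear_combination (2 * (Real.pi:ℂ) * Complex.I) * hn
      have : d = n * m := by exact_mod_cast h2
      exact ⟨n, by linarith [mul_comm n (m:ℤ)]⟩
    have hxm : x ^ m = 1 := by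
      rw [hxdef, ← Complex.exp_nat_mul]
      have : (m:ℂ) * (2 * (Real.pi:ℂ) * Complex.I * d / m) = (d:ℂ) * (2 * Real.pi * Complex.I) := by
        field_simp
      rw [this, Complex.exp_int_mul_two_pi_mul_I]
    rw [geom_sum_eq hx1, hxm]
    simp [hd]

lemma exp_sum_Icc (m : ℕ) (hm : 0 < m) (hme : Even m) (d : ℤ) :
    ∑ k ∈ Finset.Icc (-(m:ℤ)/2) ((m:ℤ)/2 - 1),
        Complex.exp (2 * (Real.pi:ℂ) * Complex.I * d * k / m)
      = if (m:ℤ) ∣ d then (m:ℂ) else 0 := by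
  obtain ⟨t, ht⟩ := hme
  have hmt : (m:ℤ) = t + t := by exact_mod_cast ht
  set N : ℤ := -(m:ℤ)/2 with hN
  have hN' : N = -(t:ℤ) := by omega
  have hupper : ((m:ℤ)/2 - 1) = N + m - 1 := by omega
  have hIcc : Finset.Icc N ((m:ℤ)/2 - 1)
      = Finset.image (fun j : ℕ => N + (j:ℤ)) (Finset.range m) := by
    ext k
    simp only [Finset.mem_Icc, Finset.mem_image, Finset.mem_range]
    constructor
    · intro ⟨h1, h2⟩
      exact ⟨(k - N).toNat, by omega, by omega⟩
    · rintro ⟨j, hj, rfl⟩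
      omega
  rw [hIcc, Finset.sum_image (by intro a _ b _ h; beta_reduce at h; omega)]
  have hsplit : ∀ j : ℕ, Complex.exp (2 * (Real.pi:ℂ) * Complex.I * d * ((N:ℂ) + j) / m)
      = Complex.exp (2 * (Real.pi:ℂ) * Complex.I * d * N / m) *
        Complex.exp (2 * (Real.pi:ℂ) * Complex.I * d * j / m) := by
    intro j
    rw [← Complex.exp_add]
    congr 1
    ring
  have hcast : ∀ j : ℕ, ((N + (j:ℤ) : ℤ) : ℂ) = (N:ℂ) + (j:ℂ) := by intro j; push_cast; ring
  calc ∑ j ∈ Finset.range m, Complex.exp (2 * (Real.pi:ℂ) * Complex.I * d * ((N + (j:ℤ) : ℤ):ℂ) / m)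
      = Complex.exp (2 * (Real.pi:ℂ) * Complex.I * d * N / m) *
        ∑ j ∈ Finset.range m, Complex.exp (2 * (Real.pi:ℂ) * Complex.I * d * j / m) := by
        rw [Finset.mul_sum]
        refine Finset.sum_congr rfl fun j _ => ?_
        rw [hcast j, hsplit j]
    _ = if (m:ℤ) ∣ d then (m:ℂ) else 0 := by
        rw [exp_sum_range m hm d]
        by_cases hd : (m:ℤ) ∣ d
        · obtain ⟨c, rfl⟩ := hd
          have harg : 2 * (Real.pi:ℂ) * Complex.I * ((m * c : ℤ):ℂ) * N / m
              = ((c * N : ℤ):ℂ) * (2 * Real.pi * Complex.I) := by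
            have hm0 : (m:ℂ) ≠ 0 := Nat.cast_ne_zero.mpr hm.ne'
            push_cast
            field_simp
          rw [harg, Complex.exp_int_mul_two_pi_mul_I]
          simp
        · simp [hd]



lemma inv_parseval (m : ℕ) (hm : 0 < m) (hme : Even m) (g : ℤ → ℂ) (h : ℕ → ℂ)
    (hh : ∀ j : ℕ, h j = (1/(m:ℂ)) * ∑ k ∈ Finset.Icc (-(m:ℤ)/2) ((m:ℤ)/2 - 1),
        g k * Complex.exp (2 * (Real.pi:ℂ) * Complex.I * (k:ℂ) * (j:ℂ) / m)) :
    ∑ j ∈ Finset.range m, ((Complex.normSq (h j) : ℝ) : ℂ)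
      = (1/(m:ℂ)) * ∑ k ∈ Finset.Icc (-(m:ℤ)/2) ((m:ℤ)/2 - 1),
          ((Complex.normSq (g k) : ℝ) : ℂ) := by
  have hm0 : (m:ℂ) ≠ 0 := Nat.cast_ne_zero.mpr hm.ne'
  set S := Finset.Icc (-(m:ℤ)/2) ((m:ℤ)/2 - 1) with hS
  have hdiag : ∀ k ∈ S, ∀ k' ∈ S, ((m:ℤ) ∣ (k - k') ↔ k' = k) := by
    intro k hk k' hk'
    simp only [hS, Finset.mem_Icc] at hk hk'
    constructor
    · intro hdvd
      have h0 : k - k' = 0 := Int.eq_zero_of_abs_lt_dvd hdvd (by rw [abs_lt]; omega)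
      omega
    · rintro rfl; simp
  have step1 : ∀ j : ℕ, ((Complex.normSq (h j) : ℝ) : ℂ)
      = (1/(m:ℂ)) * (1/(m:ℂ)) * ∑ k ∈ S, ∑ k' ∈ S,
          (g k * (starRingEnd ℂ) (g k')) *
            Complex.exp (2 * (Real.pi:ℂ) * Complex.I * ((k - k' : ℤ):ℂ) * (j:ℂ) / m) := by
    intro j
    rw [← Complex.mul_conj, hh j, map_mul, map_sum]
    have conj1 : (starRingEnd ℂ) (1/(m:ℂ)) = 1/(m:ℂ) := by simp
    rw [conj1, mul_mul_mul_comm]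
    congr 1
    rw [Finset.sum_mul_sum]
    refine Finset.sum_congr rfl fun k _ => Finset.sum_congr rfl fun k' _ => ?_
    have he : Complex.exp (2 * (Real.pi:ℂ) * Complex.I * (k:ℂ) * (j:ℂ) / m) *
        (starRingEnd ℂ) (Complex.exp (2 * (Real.pi:ℂ) * Complex.I * (k':ℂ) * (j:ℂ) / m))
        = Complex.exp (2 * (Real.pi:ℂ) * Complex.I * ((k - k' : ℤ):ℂ) * (j:ℂ) / m) := by
      rw [← Complex.exp_conj, ← Complex.exp_add]
      congr 1
      have hc : (starRingEnd ℂ) (2 * (Real.pi:ℂ) * Complex.I * (k':ℂ) * (j:ℂ) / m)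
          = -(2 * (Real.pi:ℂ) * Complex.I * (k':ℂ) * (j:ℂ) / m) := by
        simp [map_div₀, map_mul, Complex.conj_I, Complex.conj_ofReal, map_ofNat]
        ring
      rw [hc]
      push_cast
      ring
    rw [map_mul, mul_mul_mul_comm, he]
  calc ∑ j ∈ Finset.range m, ((Complex.normSq (h j) : ℝ) : ℂ)
      = ∑ j ∈ Finset.range m, ((1/(m:ℂ)) * (1/(m:ℂ)) * ∑ k ∈ S, ∑ k' ∈ S,
          (g k * (starRingEnd ℂ) (g k')) *
            Complex.exp (2 * (Real.pi:ℂ) * Complex.I * ((k - k' : ℤ):ℂ) * (j:ℂ) / m)) :=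
        Finset.sum_congr rfl fun j _ => step1 j
    _ = (1/(m:ℂ)) * (1/(m:ℂ)) * ∑ j ∈ Finset.range m, ∑ k ∈ S, ∑ k' ∈ S,
          (g k * (starRingEnd ℂ) (g k')) *
            Complex.exp (2 * (Real.pi:ℂ) * Complex.I * ((k - k' : ℤ):ℂ) * (j:ℂ) / m) := by
        rw [← Finset.mul_sum]
    _ = (1/(m:ℂ)) * (1/(m:ℂ)) * ∑ k ∈ S, ∑ k' ∈ S,
          (g k * (starRingEnd ℂ) (g k')) * (if (m:ℤ) ∣ (k - k') then (m:ℂ) else 0) := by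
        congr 1
        rw [Finset.sum_comm]
        refine Finset.sum_congr rfl fun k _ => ?_
        rw [Finset.sum_comm]
        refine Finset.sum_congr rfl fun k' _ => ?_
        rw [← Finset.mul_sum, exp_sum_range m hm (k - k')]
    _ = (1/(m:ℂ)) * (1/(m:ℂ)) * ∑ k ∈ S, ((Complex.normSq (g k) : ℝ) : ℂ) * m := by
        congr 1
        refine Finset.sum_congr rfl fun k hk => ?_
        have hterm : ∀ k' ∈ S, (g k * (starRingEnd ℂ) (g k')) *
            (if (m:ℤ) ∣ (k - k') then (m:ℂ) else 0)
            = if k' = k then (g k * (starRingEnd ℂ) (g k)) * m else 0 := by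
          intro k' hk'
          by_cases hkk : k' = k
          · subst hkk
            rw [if_pos ((hdiag k' hk k' hk').mpr rfl), if_pos rfl]
          · rw [if_neg (fun hd => hkk ((hdiag k hk k' hk').mp hd)), if_neg hkk, mul_zero]
        rw [Finset.sum_congr rfl hterm,
          Finset.sum_ite_eq' S k (fun _ => (g k * (starRingEnd ℂ) (g k)) * (m:ℂ)),
          if_pos hk, Complex.mul_conj]
    _ = (1/(m:ℂ)) * ∑ k ∈ S, ((Complex.normSq (g k) : ℝ) : ℂ) := by
        rw [← Finset.sum_mul]
        field_simp

lemma fwd_parseval (m : ℕ) (hm : 0 < m) (hme : Even m) (ψ : ℕ → ℂ) (ψhat : ℤ → ℂ)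
    (hhat : ∀ k : ℤ, ψhat k =
      ∑ j ∈ Finset.range m, ψ j *
        Complex.exp (-(2 * (Real.pi : ℂ) * Complex.I * (k : ℂ) * (j : ℂ)) / (m : ℂ))) :
    ∑ k ∈ Finset.Icc (-(m:ℤ)/2) ((m:ℤ)/2 - 1), ((Complex.normSq (ψhat k) : ℝ) : ℂ)
      = (m:ℂ) * ∑ j ∈ Finset.range m, ((Complex.normSq (ψ j) : ℝ) : ℂ) := by
  have hm0 : (m:ℂ) ≠ 0 := Nat.cast_ne_zero.mpr hm.ne'
  set S := Finset.Icc (-(m:ℤ)/2) ((m:ℤ)/2 - 1) with hS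
  have hdiag : ∀ j ∈ Finset.range m, ∀ j' ∈ Finset.range m,
      ((m:ℤ) ∣ ((j':ℤ) - (j:ℤ)) ↔ j' = j) := by
    intro j hj j' hj'
    simp only [Finset.mem_range] at hj hj'
    constructor
    · intro hdvd
      have h0 : (j':ℤ) - j = 0 := Int.eq_zero_of_abs_lt_dvd hdvd (by rw [abs_lt]; omega)
      omega
    · rintro rfl; simp
  have step1 : ∀ k : ℤ, ((Complex.normSq (ψhat k) : ℝ) : ℂ)
      = ∑ j ∈ Finset.range m, ∑ j' ∈ Finset.range m,
          (ψ j * (starRingEnd ℂ) (ψ j')) *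
            Complex.exp (2 * (Real.pi:ℂ) * Complex.I * (((j':ℤ) - (j:ℤ) : ℤ):ℂ) * (k:ℂ) / m) := by
    intro k
    rw [← Complex.mul_conj, hhat k, map_sum]
    rw [Finset.sum_mul_sum]
    refine Finset.sum_congr rfl fun j _ => Finset.sum_congr rfl fun j' _ => ?_
    have he : Complex.exp (-(2 * (Real.pi:ℂ) * Complex.I * (k:ℂ) * (j:ℂ)) / m) *
        (starRingEnd ℂ) (Complex.exp (-(2 * (Real.pi:ℂ) * Complex.I * (k:ℂ) * (j':ℂ)) / m))
        = Complex.exp (2 * (Real.pi:ℂ) * Complex.I * (((j':ℤ) - (j:ℤ) : ℤ):ℂ) * (k:ℂ) / m) := by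
      rw [← Complex.exp_conj, ← Complex.exp_add]
      congr 1
      have hc : (starRingEnd ℂ) (-(2 * (Real.pi:ℂ) * Complex.I * (k:ℂ) * (j':ℂ)) / m)
          = (2 * (Real.pi:ℂ) * Complex.I * (k:ℂ) * (j':ℂ)) / m := by
        simp [map_div₀, map_mul, Complex.conj_I, Complex.conj_ofReal, map_ofNat]
      rw [hc]
      push_cast
      ring
    rw [map_mul, mul_mul_mul_comm, he]
  calc ∑ k ∈ S, ((Complex.normSq (ψhat k) : ℝ) : ℂ)
      = ∑ k ∈ S, ∑ j ∈ Finset.range m, ∑ j' ∈ Finset.range m,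
          (ψ j * (starRingEnd ℂ) (ψ j')) *
            Complex.exp (2 * (Real.pi:ℂ) * Complex.I * (((j':ℤ) - (j:ℤ) : ℤ):ℂ) * (k:ℂ) / m) :=
        Finset.sum_congr rfl fun k _ => step1 k
    _ = ∑ j ∈ Finset.range m, ∑ j' ∈ Finset.range m,
          (ψ j * (starRingEnd ℂ) (ψ j')) * (if (m:ℤ) ∣ ((j':ℤ) - (j:ℤ)) then (m:ℂ) else 0) := by
        rw [Finset.sum_comm]
        refine Finset.sum_congr rfl fun j _ => ?_
        rw [Finset.sum_comm]
        refine Finset.sum_congr rfl fun j' _ => ?_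
        rw [← Finset.mul_sum, exp_sum_Icc m hm hme ((j':ℤ) - (j:ℤ))]
    _ = ∑ j ∈ Finset.range m, ((Complex.normSq (ψ j) : ℝ) : ℂ) * m := by
        refine Finset.sum_congr rfl fun j hj => ?_
        have hterm : ∀ j' ∈ Finset.range m, (ψ j * (starRingEnd ℂ) (ψ j')) *
            (if (m:ℤ) ∣ ((j':ℤ) - (j:ℤ)) then (m:ℂ) else 0)
            = if j' = j then (ψ j * (starRingEnd ℂ) (ψ j)) * m else 0 := by
          intro j' hj'
          by_cases hjj : j' = j
          · subst hjj
            rw [if_pos ((hdiag j' hj j' hj').mpr rfl), if_pos rfl]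
          · rw [if_neg (fun hd => hjj ((hdiag j hj j' hj').mp hd)), if_neg hjj, mul_zero]
        rw [Finset.sum_congr rfl hterm,
          Finset.sum_ite_eq' (Finset.range m) j (fun _ => (ψ j * (starRingEnd ℂ) (ψ j)) * (m:ℂ)),
          if_pos hj, Complex.mul_conj]
    _ = (m:ℂ) * ∑ j ∈ Finset.range m, ((Complex.normSq (ψ j) : ℝ) : ℂ) := by
        rw [← Finset.sum_mul]
        ring



/-- **ℓ²-contractivity of the Fourier-multiplier step of the TSFS scheme.**
With `μ_k = 2πk/(b−a)` and each Fourier mode multiplied by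
`exp(−((η+iβ)/(η²+β²))·|μ_k|^α·τ)`, the discrete ℓ²-norm does not increase. -/
theorem tsfs_fourier_step_l2_contractive
    (m : ℕ) (hm : 0 < m) (hme : Even m)
    (η β τ α a b : ℝ) (hη : 0 ≤ η) (hβ : β ≠ 0) (hτ : 0 ≤ τ)
    (hα1 : 1 < α) (hα2 : α ≤ 2) (hab : a < b)
    (μ : ℤ → ℝ) (hμ : ∀ k : ℤ, μ k = 2 * Real.pi * (k : ℝ) / (b - a))
    (ψ : ℕ → ℂ) (ψhat : ℤ → ℂ)
    (hhat : ∀ k : ℤ, ψhat k =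
      ∑ j ∈ Finset.range m, ψ j *
        Complex.exp (-(2 * (Real.pi : ℂ) * Complex.I * (k : ℂ) * (j : ℂ)) / (m : ℂ)))
    (ψss : ℕ → ℂ)
    (hss : ∀ j : ℕ, ψss j = (1 / (m : ℂ)) *
      ∑ k ∈ Finset.Icc (-(m : ℤ) / 2) ((m : ℤ) / 2 - 1),
        Complex.exp (-((((η : ℂ) + (β : ℂ) * Complex.I) / ((η : ℂ) ^ 2 + (β : ℂ) ^ 2)) *
            ((|μ k| ^ α : ℝ) : ℂ) * (τ : ℂ))) *
          ψhat k * Complex.exp (2 * (Real.pi : ℂ) * Complex.I * (k : ℂ) * (j : ℂ) / (m : ℂ))) :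
    ∑ j ∈ Finset.range m, ‖ψss j‖ ^ 2
      ≤ ∑ j ∈ Finset.range m, ‖ψ j‖ ^ 2 := by
  set S := Finset.Icc (-(m:ℤ)/2) ((m:ℤ)/2 - 1) with hSdef
  set c : ℤ → ℂ := fun k =>
    Complex.exp (-((((η : ℂ) + (β : ℂ) * Complex.I) / ((η : ℂ) ^ 2 + (β : ℂ) ^ 2)) *
      ((|μ k| ^ α : ℝ) : ℂ) * (τ : ℂ))) with hcdef
  have hD : 0 < η ^ 2 + β ^ 2 := by positivity
  -- the multiplier has modulus at most 1
  have habs : ∀ k : ℤ, ‖c k‖ ≤ 1 := by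
    intro k
    set s : ℝ := |μ k| ^ α * τ with hs
    have hs0 : 0 ≤ s := mul_nonneg (Real.rpow_nonneg (abs_nonneg _) α) hτ
    have hw : (((η : ℂ) + (β : ℂ) * Complex.I) / ((η : ℂ) ^ 2 + (β : ℂ) ^ 2)) *
        ((|μ k| ^ α : ℝ) : ℂ) * (τ : ℂ)
        = ((η * s / (η ^ 2 + β ^ 2) : ℝ) : ℂ) + ((β * s / (η ^ 2 + β ^ 2) : ℝ) : ℂ) * Complex.I := by
      have hD0 : ((η:ℂ) ^ 2 + (β:ℂ) ^ 2) ≠ 0 := by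
        have : ((η:ℂ) ^ 2 + (β:ℂ) ^ 2) = ((η ^ 2 + β ^ 2 : ℝ) : ℂ) := by push_cast; ring
        rw [this]
        exact_mod_cast hD.ne'
      rw [hs]
      push_cast
      field_simp
    rw [hcdef]
    simp only [hw, Complex.norm_exp]
    have hre : (-(((η * s / (η ^ 2 + β ^ 2) : ℝ) : ℂ) + ((β * s / (η ^ 2 + β ^ 2) : ℝ) : ℂ) * Complex.I)).re
        = -(η * s / (η ^ 2 + β ^ 2)) := by
      simp only [Complex.neg_re, Complex.add_re, Complex.ofReal_re, Complex.mul_re,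
        Complex.I_re, Complex.I_im, Complex.ofReal_im]
      ring
    rw [hre]
    have : -(η * s / (η ^ 2 + β ^ 2)) ≤ 0 := by
      have : 0 ≤ η * s / (η ^ 2 + β ^ 2) := by positivity
      linarith
    exact Real.exp_le_one_iff.mpr this
  -- reduce abs^2 to normSq
  have habs2 : ∀ z : ℂ, ‖z‖ ^ 2 = Complex.normSq z := fun z => Complex.sq_norm z
  -- inverse Parseval applied to g = c * ψhat
  have hh : ∀ j : ℕ, ψss j = (1/(m:ℂ)) * ∑ k ∈ S,
      (c k * ψhat k) * Complex.exp (2 * (Real.pi:ℂ) * Complex.I * (k:ℂ) * (j:ℂ) / m) := by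
    intro j
    exact hss j
  have hP1 := inv_parseval m hm hme (fun k => c k * ψhat k) ψss hh
  have hP2 := fwd_parseval m hm hme ψ ψhat hhat
  -- extract real versions
  have hR1 : ∑ j ∈ Finset.range m, Complex.normSq (ψss j)
      = (1/(m:ℝ)) * ∑ k ∈ S, Complex.normSq (c k * ψhat k) := by
    have := hP1
    rw [← Complex.ofReal_sum] at this
    have h2 : ((∑ j ∈ Finset.range m, Complex.normSq (ψss j) : ℝ) : ℂ)
        = (((1/(m:ℝ)) * ∑ k ∈ S, Complex.normSq (c k * ψhat k) : ℝ) : ℂ) := by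
      rw [this]
      push_cast
      ring
    exact_mod_cast h2
  have hR2 : ∑ k ∈ S, Complex.normSq (ψhat k)
      = (m:ℝ) * ∑ j ∈ Finset.range m, Complex.normSq (ψ j) := by
    have h2 : ((∑ k ∈ S, Complex.normSq (ψhat k) : ℝ) : ℂ)
        = (((m:ℝ) * ∑ j ∈ Finset.range m, Complex.normSq (ψ j) : ℝ) : ℂ) := by
      push_cast
      rw [← hP2]
    exact_mod_cast h2
  have hmono : ∑ k ∈ S, Complex.normSq (c k * ψhat k) ≤ ∑ k ∈ S, Complex.normSq (ψhat k) := by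
    refine Finset.sum_le_sum fun k _ => ?_
    rw [Complex.normSq_mul]
    have h1 : Complex.normSq (c k) ≤ 1 := by
      rw [← Complex.sq_norm]
      have := habs k
      nlinarith [norm_nonneg (c k)]
    exact mul_le_of_le_one_left (Complex.normSq_nonneg _) h1
  have hm0 : (0:ℝ) < m := Nat.cast_pos.mpr hm
  calc ∑ j ∈ Finset.range m, ‖ψss j‖ ^ 2
      = ∑ j ∈ Finset.range m, Complex.normSq (ψss j) :=
        Finset.sum_congr rfl fun j _ => habs2 _
    _ = (1/(m:ℝ)) * ∑ k ∈ S, Complex.normSq (c k * ψhat k) := hR1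
    _ ≤ (1/(m:ℝ)) * ∑ k ∈ S, Complex.normSq (ψhat k) := by
        apply mul_le_mul_of_nonneg_left hmono
        positivity
    _ = ∑ j ∈ Finset.range m, Complex.normSq (ψ j) := by
        rw [hR2]
        field_simp
    _ = ∑ j ∈ Finset.range m, ‖ψ j‖ ^ 2 :=
        (Finset.sum_congr rfl fun j _ => (habs2 _).symm)
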